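/- For every integer y ≥ 1 and every q ∈ (0,1), (2/e^{1+γ})·NB_{1/2,q}(y) ≤ √(1−q)·e^{g(y)}·(q/e)^y / y! ≤ (1/√(2e))·NB_{1/2,q}(y). -/

import Mathlib

open Real Filter Finset Topology

set_option maxHeartbeats 1000000

noncomputable abbrev γ' : ℝ := Real.eulerMascheroniConstant


/-- `ψ(y) = −γ + Σ_{k=1}^{y−1} 1/k` for a positive integer `y`. -/
noncomputable def psi (y : ℕ) : ℝ :=
  -Real.eulerMascheroniConstant + ∑ k ∈ Finset.Icc 1 (y - 1), (1 : ℝ) / k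

/-- `g(0) = 0` and `g(y) = y·ψ(y)` for `y ≥ 1`. -/
noncomputable def g (y : ℕ) : ℝ := y * psi y

/-- The normalizing sum `S(q) = Σ_{y=0}^∞ e^{g(y)}·(q/e)^y / y!` of the digamma distribution. -/
noncomputable def S (q : ℝ) : ℝ :=
  ∑' y : ℕ, Real.exp (g y) * (q / Real.exp 1) ^ y / Nat.factorial y

/-- The pmf of the negative binomial distribution with `1/2` failures and success
probability `q`: `NB_{1/2,q}(y) = (Γ(y+1/2)/(Γ(1/2)·y!))·q^y·√(1−q)`. -/
noncomputable def NB (q : ℝ) (y : ℕ) : ℝ :=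
  Real.Gamma (y + 1 / 2) / (Real.Gamma (1 / 2) * Nat.factorial y) * q ^ y * Real.sqrt (1 - q)

lemma lemE (y : ℕ) :
    Real.Gamma (y + 1/2) = Real.sqrt Real.pi * (2*y).factorial / (4^y * y.factorial) := by
  induction y with
  | zero => norm_num [Real.Gamma_one_half_eq]
  | succ y ih =>
    have h0 : ((y:ℝ) + 1/2) ≠ 0 := by positivity
    have h1 : ((y+1:ℕ):ℝ) + 1/2 = ((y:ℝ)+1/2) + 1 := by push_cast; ring
    rw [h1, Real.Gamma_add_one h0, ih]
    have h2 : 2*(y+1) = (2*y+1) + 1 := by ring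
    rw [h2, Nat.factorial_succ, Nat.factorial_succ, Nat.factorial_succ]
    have hf : ((y.factorial : ℝ)) ≠ 0 := Nat.cast_ne_zero.mpr y.factorial_ne_zero
    have h4 : (4:ℝ) ^ (y+1) = 4 * 4^y := by ring
    push_cast [h4]
    field_simp
    ring

lemma lemC (m : ℕ) :
    Real.log (Stirling.stirlingSeq (m+1)) - Real.log (Stirling.stirlingSeq (m+2)) ≤
      1 / (12 * (m+1) * (m+2)) := by
  have hs := Stirling.log_stirlingSeq_diff_hasSum m
  set x : ℝ := (1 : ℝ) / (2 * ((m:ℝ)+1) + 1) with hx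
  have hcast : ((1 : ℝ) / (2 * (↑(m+1) : ℝ) + 1)) = x := by push_cast [hx]; ring_nf
  have ht : (0:ℝ) ≤ x^2 := sq_nonneg _
  have hm0 : (0:ℝ) < 2 * ((m:ℝ)+1) + 1 := by positivity
  have ht1 : x^2 < 1 := by
    rw [hx, div_pow, one_pow, div_lt_one (by positivity)]
    nlinarith [Nat.cast_nonneg (α := ℝ) m]
  have hg := (hasSum_geometric_of_lt_one ht ht1).mul_left ((1:ℝ)/3 * x^2)
  have hle : Real.log (Stirling.stirlingSeq (m+1)) - Real.log (Stirling.stirlingSeq (m+2)) ≤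
      (1:ℝ)/3 * x^2 * (1 - x^2)⁻¹ := by
    refine hasSum_le ?_ hs hg
    intro k
    rw [hcast]
    have h1 : (x^2)^(k+1) = x^2 * (x^2)^k := pow_succ' _ _
    rw [h1]
    have h2 : (1:ℝ) / (2 * (↑(k+1):ℝ) + 1) ≤ 1/3 := by
      rw [div_le_div_iff₀ (by positivity) (by norm_num)]
      push_cast; nlinarith [Nat.cast_nonneg (α := ℝ) k]
    calc (1:ℝ) / (2 * (↑(k+1):ℝ) + 1) * (x^2 * (x^2)^k)
        ≤ 1/3 * (x^2 * (x^2)^k) := by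
          apply mul_le_mul_of_nonneg_right h2 (by positivity)
      _ = 1/3 * x^2 * (x^2)^k := by ring
  refine hle.trans (le_of_eq ?_)
  have h1x : (1 : ℝ) - x^2 ≠ 0 := by nlinarith
  have h2 : (1:ℝ) - x^2 = (4*((m:ℝ)+1)*((m:ℝ)+2)) / (2*((m:ℝ)+1)+1)^2 := by
    rw [hx]; field_simp; ring
  rw [h2, hx]
  rw [div_pow, one_pow]
  rw [inv_div]
  field_simp
  ring

lemma logratio_ge {a : ℝ} (ha : 0 < a) : 2 * (1/(2*a+1)) ≤ Real.log (1 + a⁻¹) := by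
  have hs := Real.hasSum_log_one_add_inv ha
  have := le_hasSum hs 0 (fun k _ => by positivity)
  simpa using this

lemma logratio_le {a u : ℝ} (ha : 0 < a) (hu : u = 1/(2*a+1)) :
    Real.log (1 + a⁻¹) ≤ 2 * u + 2/3 * u^3 * (1 - u^2)⁻¹ := by
  have hu0 : 0 < u := by rw [hu]; positivity
  have hu1 : u < 1 := by
    rw [hu, div_lt_one (by positivity)]; linarith
  have hs := Real.hasSum_log_one_add_inv ha
  rw [← hu] at hs
  have hrest : HasSum (fun k : ℕ => (2:ℝ) * (1/(2*(↑(k+1):ℝ)+1)) * u ^ (2*(k+1)+1))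
      (Real.log (1 + a⁻¹) - 2 * u) := by
    have h := (hasSum_nat_add_iff' (f := fun k : ℕ => (2:ℝ) * (1/(2*(k:ℝ)+1)) * u ^ (2*k+1))
      (g := Real.log (1 + a⁻¹)) 1).mpr hs
    have h0 : ∑ i ∈ range 1, (2:ℝ) * (1/(2*(i:ℝ)+1)) * u ^ (2*i+1) = 2 * u := by
      simp
    rw [h0] at h
    convert h using 2
  have hgeo : HasSum (fun k : ℕ => ((2:ℝ)/3 * u^3) * (u^2)^k)
      ((2/3 * u^3) * (1 - u^2)⁻¹) := by
    exact (hasSum_geometric_of_lt_one (sq_nonneg u) (by nlinarith)).mul_left _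
  have hle := hasSum_le (fun k => ?_) hrest hgeo
  · linarith
  · have h1 : u ^ (2*(k+1)+1) = u^3 * (u^2)^k := by
      rw [← pow_mul, ← pow_add]; ring_nf
    rw [h1]
    have h2 : (2:ℝ) * (1/(2*(↑(k+1):ℝ)+1)) ≤ 2/3 := by
      rw [mul_one_div, div_le_div_iff₀ (by positivity) (by norm_num)]
      push_cast; nlinarith [Nat.cast_nonneg (α := ℝ) k]
    calc (2:ℝ) * (1/(2*(↑(k+1):ℝ)+1)) * (u^3 * (u^2)^k)
        ≤ 2/3 * (u^3 * (u^2)^k) := mul_le_mul_of_nonneg_right h2 (by positivity)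
      _ = (2/3 * u^3) * (u^2)^k := by ring

lemma lemA (n : ℕ) : Real.log (n + 1/2) + γ' ≤ (harmonic n : ℝ) := by
  set t : ℕ → ℝ := fun n => (harmonic n : ℝ) - Real.log (n + 1/2) with ht
  have hanti : ∀ m, t (m+1) ≤ t m := by
    intro m
    have ha : (0:ℝ) < (m:ℝ) + 1/2 := by positivity
    have hlog : Real.log ((m:ℝ)+1+1/2) - Real.log ((m:ℝ)+1/2) = Real.log (1 + ((m:ℝ)+1/2)⁻¹) := by
      rw [← Real.log_div (by positivity) (by positivity)]
      congr 1
      field_simp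
      ring
    have hge := logratio_ge ha
    have h2 : 2 * (1/(2*((m:ℝ)+1/2)+1)) = ((m:ℝ)+1)⁻¹ := by
      field_simp
      ring
    rw [h2] at hge
    have hh : (harmonic (m+1) : ℝ) = (harmonic m : ℝ) + ((m:ℝ)+1)⁻¹ := by
      rw [harmonic_succ]; push_cast; ring
    simp only [ht]
    push_cast
    rw [hh]
    linarith [hge, hlog.le]
  have hanti' : Antitone t := antitone_nat_of_succ_le hanti
  have htend : Tendsto t atTop (𝓝 γ') := by
    have h1 : Tendsto (fun n : ℕ => Real.log (1 + 1/(2*(n:ℝ)))) atTop (𝓝 0) := by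
      have h2 : Tendsto (fun n : ℕ => 1 + 1/(2*(n:ℝ))) atTop (𝓝 1) := by
        have h3 : Tendsto (fun n : ℕ => 2*(n:ℝ)) atTop atTop :=
          (tendsto_natCast_atTop_atTop).const_mul_atTop (by norm_num)
        have := h3.inv_tendsto_atTop
        simpa [one_div] using tendsto_const_nhds.add this
      have hc := (Real.continuousAt_log (by norm_num : (1:ℝ) ≠ 0)).tendsto.comp h2
      simpa [Function.comp_def] using hc
    have h4 : Tendsto (fun n : ℕ => Real.eulerMascheroniSeq' n - Real.log (1 + 1/(2*(n:ℝ)))) atTop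
        (𝓝 γ') := by
      simpa using Real.tendsto_eulerMascheroniSeq'.sub h1
    apply h4.congr'
    filter_upwards [eventually_ne_atTop 0] with m hm
    have hm0 : (0:ℝ) < (m:ℝ) := by
      have := Nat.pos_of_ne_zero hm; exact_mod_cast this
    simp only [Real.eulerMascheroniSeq', if_neg hm, ht]
    have hsplit : (m:ℝ) + 1/2 = (m:ℝ) * (1 + 1/(2*(m:ℝ))) := by field_simp
    rw [hsplit, Real.log_mul (by positivity) (by positivity)]
    ring
  have := le_of_tendsto htend (eventually_atTop.2 ⟨n, fun m hm => hanti' hm⟩)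
  simp only [ht] at this
  linarith

lemma lemB (n : ℕ) (hn : 1 ≤ n) :
    (harmonic n : ℝ) - Real.log n - 1/(2*n) + 1/(24*n^2) ≤ γ' := by
  set v : ℕ → ℝ := fun n => (harmonic n : ℝ) - Real.log n - 1/(2*n) + 1/(24*n^2) with hv
  have hstep : ∀ m : ℕ, 1 ≤ m → v m ≤ v (m+1) := by
    intro m hm
    have hm1 : (1:ℝ) ≤ (m:ℝ) := by exact_mod_cast hm
    have hm0 : (0:ℝ) < (m:ℝ) := by linarith
    have hh : (harmonic (m+1) : ℝ) = (harmonic m : ℝ) + ((m:ℝ)+1)⁻¹ := by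
      rw [harmonic_succ]; push_cast; ring
    have hlogsplit : Real.log ((m:ℝ)+1) = Real.log (m:ℝ) + Real.log (1 + ((m:ℝ))⁻¹) := by
      have hsplit : (m:ℝ) + 1 = (m:ℝ) * (1 + ((m:ℝ))⁻¹) := by field_simp
      rw [hsplit, Real.log_mul (by positivity) (by positivity)]
    have hle := logratio_le (a := (m:ℝ)) (u := 1/(2*(m:ℝ)+1)) hm0 rfl
    have hrat : 2 * (1/(2*(m:ℝ)+1)) + 2/3 * (1/(2*(m:ℝ)+1))^3 * (1 - (1/(2*(m:ℝ)+1))^2)⁻¹ ≤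
        ((m:ℝ)+1)⁻¹ + 1/(2*(m:ℝ)) - 1/(2*((m:ℝ)+1)) + 1/(24*((m:ℝ)+1)^2) - 1/(24*(m:ℝ)^2) := by
      have he : (1:ℝ) - (1/(2*(m:ℝ)+1))^2 = (4*(m:ℝ)*((m:ℝ)+1))/(2*(m:ℝ)+1)^2 := by
        field_simp; ring
      rw [he, inv_div]
      rw [div_pow, one_pow]
      rw [← sub_nonneg]
      have key : ((m:ℝ)+1)⁻¹ + 1/(2*(m:ℝ)) - 1/(2*((m:ℝ)+1)) + 1/(24*((m:ℝ)+1)^2) - 1/(24*(m:ℝ)^2)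
          - (2 * (1/(2*(m:ℝ)+1)) + 2/3 * (1/(2*(m:ℝ)+1)^3) * ((2*(m:ℝ)+1)^2/(4*(m:ℝ)*((m:ℝ)+1))))
          = (4*(m:ℝ)^2+4*(m:ℝ)-1) / (24*(m:ℝ)^2*((m:ℝ)+1)^2*(2*(m:ℝ)+1)) := by
        field_simp
        ring
      rw [key]
      apply div_nonneg (by nlinarith) (by positivity)
    simp only [hv]
    push_cast
    rw [hh, hlogsplit]
    have h24 : 1/(24*((m:ℝ)+1)^2) - 1/(24*(m:ℝ)^2) ≤ 0 := by
      rw [sub_nonpos, div_le_div_iff₀ (by positivity) (by positivity)]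
      nlinarith
    linarith [hle.trans hrat]
  have hmono : ∀ k, n ≤ k → v n ≤ v k := by
    intro k hk
    induction k, hk using Nat.le_induction with
    | base => exact le_rfl
    | succ k hk ih => exact ih.trans (hstep k (le_trans hn hk))
  have htend : Tendsto v atTop (𝓝 γ') := by
    have h0a : Tendsto (fun n : ℕ => 1/(2*(n:ℝ))) atTop (𝓝 0) := by
      have h3 : Tendsto (fun n : ℕ => 2*(n:ℝ)) atTop atTop :=
        (tendsto_natCast_atTop_atTop).const_mul_atTop (by norm_num)
      refine h3.inv_tendsto_atTop.congr fun x => ?_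
      simp [one_div]
    have h0b : Tendsto (fun n : ℕ => 1/(24*(n:ℝ)^2)) atTop (𝓝 0) := by
      have h3 : Tendsto (fun n : ℕ => 24*(n:ℝ)^2) atTop atTop := by
        apply Tendsto.const_mul_atTop (by norm_num)
        exact (tendsto_pow_atTop (two_ne_zero)).comp tendsto_natCast_atTop_atTop
      refine h3.inv_tendsto_atTop.congr fun x => ?_
      simp [one_div]
    have h4 : Tendsto (fun n : ℕ =>
        Real.eulerMascheroniSeq' n - 1/(2*(n:ℝ)) + 1/(24*(n:ℝ)^2)) atTop (𝓝 γ') := by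
      simpa using (Real.tendsto_eulerMascheroniSeq'.sub h0a).add h0b
    apply h4.congr'
    filter_upwards [eventually_ne_atTop 0] with m hm
    simp only [Real.eulerMascheroniSeq', if_neg hm, hv]
  have hfin := ge_of_tendsto htend (eventually_atTop.2 ⟨n, fun m hm => hmono m hm⟩)
  exact hfin

lemma lemD (y : ℕ) (hy : 1 ≤ y) :
    Real.log (Stirling.stirlingSeq y) - Real.log (Stirling.stirlingSeq (2*y)) ≤ 1/(24*(y:ℝ)) := by
  obtain ⟨z, rfl⟩ : ∃ z, y = z + 1 := ⟨y - 1, (Nat.succ_pred_eq_of_pos hy).symm⟩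
  set F : ℕ → ℝ := fun i => Real.log (Stirling.stirlingSeq (z + 1 + i)) with hF
  set h : ℕ → ℝ := fun i => 1/(12*((z:ℝ)+1+(i:ℝ))) with hh
  have htel : Real.log (Stirling.stirlingSeq (z+1)) - Real.log (Stirling.stirlingSeq (2*(z+1)))
      = ∑ i ∈ Finset.range (z+1), (F i - F (i+1)) := by
    rw [Finset.sum_range_sub' F (z+1)]
    simp only [hF, Nat.add_zero]
    rw [show 2*(z+1) = z+1+(z+1) from by ring]
  rw [htel]
  have hbound : ∀ i ∈ Finset.range (z+1), F i - F (i+1) ≤ h i - h (i+1) := by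
    intro i _
    have hc := lemC (z+i)
    have e1 : z + 1 + i = (z+i) + 1 := by omega
    have e2 : z + 1 + (i+1) = (z+i) + 2 := by omega
    have e3 : (1:ℝ) / (12 * (↑(z+i)+1) * (↑(z+i)+2)) = h i - h (i+1) := by
      rw [hh]
      push_cast
      have p1 : ((z:ℝ)+1+(i:ℝ)) ≠ 0 := by positivity
      have p2 : ((z:ℝ)+1+((i:ℝ)+1)) ≠ 0 := by positivity
      field_simp
      ring
    simp only [hF]
    rw [e1, e2]
    rw [← e3]
    convert hc using 3 <;> push_cast <;> ring
  refine (Finset.sum_le_sum hbound).trans (le_of_eq ?_)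
  rw [Finset.sum_range_sub' h (z+1)]
  simp only [hh]
  push_cast
  have p1 : ((z:ℝ)+1) ≠ 0 := by positivity
  field_simp
  ring

lemma psi_eq (y : ℕ) : psi y = -γ' + ((harmonic (y-1) : ℚ) : ℝ) := by
  have h : ((harmonic (y-1) : ℚ) : ℝ) = ∑ k ∈ Finset.Icc 1 (y-1), (1:ℝ)/k := by
    rw [harmonic_eq_sum_Icc]
    push_cast
    simp [one_div]
  rw [psi, h]

lemma g_one : g 1 = -γ' := by
  simp [g, psi]

lemma g_eq (y : ℕ) (hy : 1 ≤ y) :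
    g y = (y:ℝ) * ((harmonic y : ℚ) : ℝ) - (y:ℝ) * γ' - 1 := by
  obtain ⟨z, rfl⟩ : ∃ z, y = z + 1 := ⟨y - 1, (Nat.succ_pred_eq_of_pos hy).symm⟩
  rw [g, psi_eq]
  simp only [Nat.add_sub_cancel]
  rw [harmonic_succ]
  have p1 : ((z:ℝ)+1) ≠ 0 := by positivity
  push_cast
  field_simp
  ring

lemma g_succ (y : ℕ) (hy : 1 ≤ y) :
    g (y+1) = g y + 1 + (((harmonic y : ℚ) : ℝ) - γ') := by
  rw [g_eq y hy, g_eq (y+1) (by omega)]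
  rw [harmonic_succ]
  have p1 : ((y:ℝ)+1) ≠ 0 := by positivity
  push_cast
  field_simp
  ring

lemma g_le (y : ℕ) (hy : 1 ≤ y) :
    g y ≤ (y:ℝ) * Real.log y - 1/2 - 1/(24*(y:ℝ)) := by
  have hy0 : (0:ℝ) < (y:ℝ) := by exact_mod_cast hy
  have hb := lemB y hy
  have hmul := mul_le_mul_of_nonneg_left hb hy0.le
  have expand : (y:ℝ) * (((harmonic y : ℚ):ℝ) - Real.log y - 1/(2*(y:ℝ)) + 1/(24*(y:ℝ)^2)) =
      (y:ℝ)*((harmonic y : ℚ):ℝ) - (y:ℝ)*Real.log y - 1/2 + 1/(24*(y:ℝ)) := by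
    field_simp
  rw [expand] at hmul
  rw [g_eq y hy]
  linarith

lemma log_fact (y : ℕ) (hy : 1 ≤ y) :
    Real.log (y.factorial) = Real.log (Stirling.stirlingSeq y) + 1/2 * Real.log (2*(y:ℝ)) +
      (y:ℝ) * (Real.log y - 1) := by
  have h := Stirling.log_stirlingSeq_formula y
  have hy0 : (0:ℝ) < (y:ℝ) := by exact_mod_cast hy
  have hle : Real.log ((y:ℝ) / Real.exp 1) = Real.log y - 1 := by
    rw [Real.log_div hy0.ne' (Real.exp_ne_zero 1), Real.log_exp]
  rw [hle] at h
  linarith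

lemma lemT_le (y : ℕ) (hy : 1 ≤ y) :
    Real.exp (g y - y) * Real.sqrt Real.pi / Real.Gamma (y + 1/2) ≤
      1 / Real.sqrt (2 * Real.exp 1) := by
  have hy0 : (0:ℝ) < (y:ℝ) := by exact_mod_cast hy
  have hf1 : (0:ℝ) < (y.factorial : ℝ) := by exact_mod_cast y.factorial_pos
  have hf2 : (0:ℝ) < ((2*y).factorial : ℝ) := by exact_mod_cast (2*y).factorial_pos
  have hsq : (0:ℝ) < Real.sqrt Real.pi := Real.sqrt_pos.mpr Real.pi_pos
  -- LHS as an exponential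
  have hLHS : Real.exp (g y - y) * Real.sqrt Real.pi / Real.Gamma (y + 1/2) =
      Real.exp (g y - y + (y:ℝ) * Real.log 4 + Real.log (y.factorial) -
        Real.log ((2*y).factorial)) := by
    have hexp : Real.exp (g y - y + (y:ℝ) * Real.log 4 + Real.log (y.factorial) -
        Real.log ((2*y).factorial)) =
        Real.exp (g y - y) * 4^y * (y.factorial : ℝ) / ((2*y).factorial : ℝ) := by
      rw [Real.exp_sub, Real.exp_add, Real.exp_add, Real.exp_nat_mul,
        Real.exp_log (by norm_num : (0:ℝ) < 4), Real.exp_log hf1, Real.exp_log hf2]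
    rw [lemE y, hexp]
    field_simp [hf2.ne', hsq.ne']
  have hRHS : (1:ℝ) / Real.sqrt (2 * Real.exp 1) = Real.exp (-(Real.log 2 + 1)/2) := by
    have hX : Real.sqrt (2*Real.exp 1) = Real.exp ((Real.log 2 + 1)/2) := by
      rw [Real.sqrt_eq_rpow, Real.rpow_def_of_pos (by positivity),
        Real.log_mul (by norm_num) (Real.exp_ne_zero 1), Real.log_exp]
      ring_nf
    rw [hX, one_div, ← Real.exp_neg]
    ring_nf
  rw [hLHS, hRHS, Real.exp_le_exp]
  -- expand factorials via stirlingSeq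
  have h1 := log_fact y hy
  have h2 := log_fact (2*y) (by omega)
  have hcast : ((2*y : ℕ) : ℝ) = 2*(y:ℝ) := by push_cast; ring
  rw [hcast] at h2
  have hlog2y : Real.log (2*(y:ℝ)) = Real.log 2 + Real.log y :=
    Real.log_mul (by norm_num) hy0.ne'
  have hlog4y : Real.log (2*(2*(y:ℝ))) = 2*Real.log 2 + Real.log y := by
    rw [show 2*(2*(y:ℝ)) = 2*2*(y:ℝ) by ring, Real.log_mul (by norm_num) hy0.ne',
      show (2:ℝ)*2 = 2^2 by norm_num, Real.log_pow]
    push_cast; ring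
  have hlog2ymul : Real.log (2*(y:ℝ)) = Real.log 2 + Real.log y := hlog2y
  have hlog4 : Real.log (4:ℝ) = 2 * Real.log 2 := by
    rw [show (4:ℝ) = 2^2 by norm_num, Real.log_pow]; push_cast; ring
  have hD := lemD y hy
  have hG := g_le y hy
  rw [h1, h2, hlog4, hlog2y, hlog4y]
  push_cast
  nlinarith [hD, hG]

lemma lemT_ge (y : ℕ) (hy : 1 ≤ y) :
    2 / Real.exp (1 + γ') ≤ Real.exp (g y - y) * Real.sqrt Real.pi / Real.Gamma (y + 1/2) := by
  have hsq : (0:ℝ) < Real.sqrt Real.pi := Real.sqrt_pos.mpr Real.pi_pos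
  induction y, hy using Nat.le_induction with
  | base =>
    have hG : Real.Gamma ((1:ℕ) + 1/2) = Real.sqrt Real.pi / 2 := by
      have : ((1:ℕ):ℝ) + 1/2 = 1/2 + 1 := by norm_num
      rw [this, Real.Gamma_add_one (by norm_num), Real.Gamma_one_half_eq]
      ring
    rw [hG, g_one]
    rw [show -γ' - ((1:ℕ):ℝ) = -(1 + γ') by push_cast; ring]
    apply le_of_eq
    rw [Real.exp_neg]
    field_simp [hsq.ne', (Real.exp_pos (1 + γ')).ne']

  | succ y hy1 ih =>
    have hy0 : (0:ℝ) < (y:ℝ) := by exact_mod_cast hy1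
    have hΓpos : (0:ℝ) < Real.Gamma ((y:ℝ) + 1/2) := Real.Gamma_pos_of_pos (by positivity)
    have hGstep : Real.Gamma (((y+1:ℕ):ℝ) + 1/2) = ((y:ℝ)+1/2) * Real.Gamma ((y:ℝ)+1/2) := by
      have e : ((y+1:ℕ):ℝ) + 1/2 = ((y:ℝ)+1/2) + 1 := by push_cast; ring
      rw [e, Real.Gamma_add_one (by positivity)]
    have hkey : Real.exp (g (y+1) - (y+1:ℕ)) * Real.sqrt Real.pi /
          Real.Gamma (((y+1:ℕ):ℝ) + 1/2) =
        (Real.exp (g y - y) * Real.sqrt Real.pi / Real.Gamma ((y:ℝ)+1/2)) *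
          (Real.exp (((harmonic y : ℚ):ℝ) - γ') / ((y:ℝ)+1/2)) := by
      rw [hGstep, g_succ y hy1]
      rw [show g y + 1 + (((harmonic y : ℚ):ℝ) - γ') - ((y+1:ℕ):ℝ) =
        (g y - y) + (((harmonic y : ℚ):ℝ) - γ') by push_cast; ring]
      rw [Real.exp_add]
      field_simp
    have hfac : (1:ℝ) ≤ Real.exp (((harmonic y : ℚ):ℝ) - γ') / ((y:ℝ)+1/2) := by
      rw [le_div_iff₀ (by positivity), one_mul]
      calc (y:ℝ)+1/2 = Real.exp (Real.log ((y:ℝ)+1/2)) := (Real.exp_log (by positivity)).symm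
        _ ≤ Real.exp (((harmonic y : ℚ):ℝ) - γ') := by
            rw [Real.exp_le_exp]
            have := lemA y
            linarith
    have hpos : (0:ℝ) ≤ Real.exp (g y - y) * Real.sqrt Real.pi / Real.Gamma ((y:ℝ)+1/2) := by
      positivity
    calc 2 / Real.exp (1 + γ') ≤ Real.exp (g y - y) * Real.sqrt Real.pi /
          Real.Gamma ((y:ℝ)+1/2) := ih
      _ = (Real.exp (g y - y) * Real.sqrt Real.pi / Real.Gamma ((y:ℝ)+1/2)) * 1 := by ring
      _ ≤ (Real.exp (g y - y) * Real.sqrt Real.pi / Real.Gamma ((y:ℝ)+1/2)) *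
          (Real.exp (((harmonic y : ℚ):ℝ) - γ') / ((y:ℝ)+1/2)) :=
            mul_le_mul_of_nonneg_left hfac hpos
      _ = _ := hkey.symm

/-- For every integer `y ≥ 1` and every `q ∈ (0,1)`,
`(2/e^{1+γ})·NB_{1/2,q}(y) ≤ √(1−q)·e^{g(y)}·(q/e)^y / y! ≤ (1/√(2e))·NB_{1/2,q}(y)`. -/
theorem stmt5 (y : ℕ) (hy : 1 ≤ y) (q : ℝ) (hq : q ∈ Set.Ioo (0 : ℝ) 1) :
    (2 / Real.exp (1 + Real.eulerMascheroniConstant)) * NB q y ≤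
        Real.sqrt (1 - q) * Real.exp (g y) * (q / Real.exp 1) ^ y / Nat.factorial y ∧
      Real.sqrt (1 - q) * Real.exp (g y) * (q / Real.exp 1) ^ y / Nat.factorial y ≤
        (1 / Real.sqrt (2 * Real.exp 1)) * NB q y := by
  obtain ⟨hq0, hq1⟩ := hq
  have hΓ : 0 < Real.Gamma ((y:ℝ) + 1/2) := Real.Gamma_pos_of_pos (by positivity)
  have hsq : (0:ℝ) < Real.sqrt Real.pi := Real.sqrt_pos.mpr Real.pi_pos
  have hf1 : (0:ℝ) < (y.factorial : ℝ) := by exact_mod_cast y.factorial_pos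
  have hNB : 0 ≤ NB q y := by
    rw [NB]
    apply mul_nonneg (mul_nonneg (div_nonneg hΓ.le (by positivity)) (pow_nonneg hq0.le y))
      (Real.sqrt_nonneg _)
  have hmid : Real.sqrt (1 - q) * Real.exp (g y) * (q / Real.exp 1) ^ y / Nat.factorial y =
      NB q y * (Real.exp (g y - y) * Real.sqrt Real.pi / Real.Gamma ((y:ℝ) + 1/2)) := by
    rw [NB, Real.Gamma_one_half_eq]
    have hpow : (Real.exp 1)^y = Real.exp (y:ℝ) := by rw [← Real.exp_nat_mul, mul_one]
    rw [div_pow, hpow, Real.exp_sub]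
    field_simp [hΓ.ne', hsq.ne', (Real.exp_pos ((y:ℝ))).ne']
  have h1 := lemT_ge y hy
  have h2 := lemT_le y hy
  constructor
  · calc (2 / Real.exp (1 + Real.eulerMascheroniConstant)) * NB q y
        = NB q y * (2 / Real.exp (1 + γ')) := by rw [mul_comm]
      _ ≤ NB q y * (Real.exp (g y - y) * Real.sqrt Real.pi / Real.Gamma ((y:ℝ) + 1/2)) :=
          mul_le_mul_of_nonneg_left h1 hNB
      _ = _ := hmid.symm
  · calc Real.sqrt (1 - q) * Real.exp (g y) * (q / Real.exp 1) ^ y / Nat.factorial y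
        = NB q y * (Real.exp (g y - y) * Real.sqrt Real.pi / Real.Gamma ((y:ℝ) + 1/2)) := hmid
      _ ≤ NB q y * (1 / Real.sqrt (2 * Real.exp 1)) := mul_le_mul_of_nonneg_left h2 hNB
      _ = (1 / Real.sqrt (2 * Real.exp 1)) * NB q y := by rw [mul_comm]
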